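/- arXiv:0809.5153 — 4 statements merged into one kernel-verified Lean document; each statement's English description precedes it below -/
import Mathlib

section
/- Let ε > 0 and let φ, φ̃ : ℝ → ℝ be continuous functions satisfying |φ(t)| ≤ C₁(1+|t|)^{−1−ε} and |φ̃(t)| ≤ C₂(1+|t|)^{−1−ε} for all t ∈ ℝ. Define q(x,y) = Σ_{j∈ℤ} φ̃(x−j)·φ(y−j). Then for every fixed x₁ ∈ ℝ the function y ↦ q(x₁,y) belongs to L²(ℝ), and moreover the norm ‖q(x₁,·)‖_{L²(ℝ)} is bounded uniformly for x₁ ranging in any compact subset of ℝ. Analogously, for every fixed y₁ ∈ ℝ the function x ↦ q(x,y₁) belongs to L²(ℝ), uniformly for y₁ in compact sets. -/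
open MeasureTheory ENNReal Filter

noncomputable section

/-- The Walter kernel `q(x,y) = Σ_{j∈ℤ} φ̃(x−j)·φ(y−j)`. -/
def qker (φ φt : ℝ → ℝ) (x y : ℝ) : ℝ := ∑' j : ℤ, φt (x - j) * φ (y - j)

lemma wk_summable_base (ε : ℝ) (hε : 0 < ε) :
    Summable (fun j : ℤ => ((1:ℝ) + |(j:ℝ)|) ^ (-(1+ε))) := by
  refine (Real.summable_abs_int_rpow (by linarith : (1:ℝ) < 1 + ε)).of_norm_bounded_eventually ?_
  have h0 : ({(0:ℤ)} : Set ℤ).Finite := Set.finite_singleton _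
  filter_upwards [h0.compl_mem_cofinite] with j hj
  have hj' : j ≠ 0 := hj
  have h1 : (1:ℝ) ≤ |(j:ℝ)| := by
    rw [← Int.cast_abs]; exact_mod_cast Int.one_le_abs hj'
  rw [Real.norm_eq_abs, abs_of_nonneg (Real.rpow_nonneg (by positivity) _)]
  exact Real.rpow_le_rpow_of_nonpos (by linarith) (by linarith) (by linarith)

/-- `(1+|x−j|)^{−(1+ε)} ≤ (1+|x|)^{1+ε} · (1+|j|)^{−(1+ε)}`. -/
lemma wk_shift_bound (ε x : ℝ) (hε : 0 < ε) (j : ℝ) :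
    (1 + |x - j|) ^ (-(1+ε)) ≤ (1 + |x|) ^ (1+ε) * (1 + |j|) ^ (-(1+ε)) := by
  have hx : (0:ℝ) < 1 + |x| := by positivity
  have hxj : (0:ℝ) < 1 + |x - j| := by positivity
  have hj : (0:ℝ) < 1 + |j| := by positivity
  have key : 1 + |j| ≤ (1 + |x|) * (1 + |x - j|) := by
    have : |j| ≤ |x| + |x - j| := by
      have := abs_sub_abs_le_abs_sub j x
      have h2 := abs_sub_comm x j
      nlinarith [abs_sub (x) (j), abs_nonneg x, abs_nonneg (x - j), abs_sub_comm j x,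
        abs_sub_abs_le_abs_sub j x, abs_abs_sub_abs_le_abs_sub j x]
    nlinarith [abs_nonneg x, abs_nonneg (x - j)]
  have h1 : ((1 + |x|) * (1 + |x - j|)) ^ (-(1+ε)) ≤ (1 + |j|) ^ (-(1+ε)) :=
    Real.rpow_le_rpow_of_nonpos hj key (by linarith)
  rw [Real.mul_rpow hx.le hxj.le] at h1
  have h2 : (1 + |x|) ^ (1+ε) * ((1 + |x|) ^ (-(1+ε)) * (1 + |x - j|) ^ (-(1+ε)))
      ≤ (1 + |x|) ^ (1+ε) * (1 + |j|) ^ (-(1+ε)) :=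
    mul_le_mul_of_nonneg_left h1 (Real.rpow_nonneg hx.le _)
  calc (1 + |x - j|) ^ (-(1+ε))
      = (1 + |x|) ^ (1+ε) * ((1 + |x|) ^ (-(1+ε)) * (1 + |x - j|) ^ (-(1+ε))) := by
        rw [← mul_assoc, ← Real.rpow_add hx, add_neg_cancel, Real.rpow_zero, one_mul]
    _ ≤ _ := h2
lemma wk_memL2 (ε C : ℝ) (hε : 0 < ε) (hC : 0 < C) (f : ℝ → ℝ) (hfc : Continuous f)
    (hf : ∀ t : ℝ, |f t| ≤ C / (1 + |t|) ^ (1 + ε)) : MemLp f 2 volume := by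
  rw [memLp_two_iff_integrable_sq hfc.aestronglyMeasurable]
  have h1 : Integrable (fun t : ℝ => C ^ 2 * (1 + ‖t‖) ^ (-(2 * (1 + ε)))) volume := by
    apply Integrable.const_mul
    apply integrable_one_add_norm
    rw [Module.finrank_self]
    push_cast
    nlinarith
  refine h1.mono' ((hfc.pow 2).aestronglyMeasurable) (ae_of_all _ fun t => ?_)
  have ht : (0:ℝ) < 1 + |t| := by positivity
  have h2 : ‖f t ^ 2‖ = |f t| ^ 2 := by
    rw [Real.norm_eq_abs, ← abs_pow]
  rw [h2, Real.norm_eq_abs]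
  calc |f t| ^ 2 ≤ (C / (1 + |t|) ^ (1 + ε)) ^ 2 :=
        pow_le_pow_left₀ (abs_nonneg _) (hf t) 2
    _ = C ^ 2 * (1 + |t|) ^ (-(2 * (1 + ε))) := by
        rw [div_pow, ← Real.rpow_natCast ((1 + |t|) ^ (1 + ε)) 2, ← Real.rpow_mul ht.le,
          div_eq_mul_inv, ← Real.rpow_neg ht.le]
        ring_nf
/-- Minkowski-type bound for a series of translates. -/
lemma wk_main (c : ℤ → ℝ) (hc : Summable fun j => |c j|) (C : ℝ) (hC : 0 ≤ C)
    (f : ℝ → ℝ) (hfc : Continuous f) (hfb : ∀ t, |f t| ≤ C) (hf2 : MemLp f 2 volume) :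
    MemLp (fun y => ∑' j : ℤ, c j * f (y - j)) 2 volume ∧
    eLpNorm (fun y => ∑' j : ℤ, c j * f (y - j)) 2 volume ≤
      ENNReal.ofReal (∑' j, |c j|) * eLpNorm f 2 volume := by
  set g : ℝ → ℝ := fun y => ∑' j : ℤ, c j * f (y - j) with hg
  have hbound : ∀ (j : ℤ) (y : ℝ), ‖c j * f (y - j)‖ ≤ |c j| * C := fun j y => by
    rw [Real.norm_eq_abs, abs_mul]
    exact mul_le_mul_of_nonneg_left (hfb _) (abs_nonneg _)
  have hgc : Continuous g :=
    continuous_tsum (fun j => (continuous_const.mul (hfc.comp (continuous_sub_right _))))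
      (hc.mul_right C) hbound
  have hsum : ∀ y, Summable fun j : ℤ => c j * f (y - j) := fun y =>
    Summable.of_norm_bounded (hc.mul_right C) (fun j => hbound j y)
  -- partial sums
  set F : ℕ → ℝ → ℝ := fun n y => ∑ j ∈ Finset.Icc (-(n:ℤ)) (n:ℤ), c j * f (y - j) with hF
  have hFmeas : ∀ n, AEStronglyMeasurable (F n) volume := fun n => by
    apply Continuous.aestronglyMeasurable
    exact continuous_finset_sum _ fun j _ =>
      continuous_const.mul (hfc.comp (continuous_sub_right _))
  have htend : ∀ y, Tendsto (fun n => F n y) atTop (nhds (g y)) := by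
    intro y
    have h1 := (hsum y).hasSum
    have h2 : Tendsto (fun n : ℕ => Finset.Icc (-(n:ℤ)) (n:ℤ)) atTop atTop := by
      apply tendsto_atTop_finset_of_monotone
      · intro n m h
        exact Finset.Icc_subset_Icc (by exact_mod_cast neg_le_neg (Int.ofNat_le.mpr h))
          (by exact_mod_cast h)
      · intro j
        refine ⟨j.natAbs, ?_⟩
        simp only [Finset.mem_Icc]
        omega
    exact h1.comp h2
  set Φ := eLpNorm f 2 volume with hΦ
  set T := ∑' j, |c j| with hT
  have hterm : ∀ j : ℤ, eLpNorm (fun y => c j * f (y - (j:ℝ))) 2 volume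
      = (‖c j‖₊ : ℝ≥0∞) * Φ := by
    intro j
    have e1 : (fun y => c j * f (y - (j:ℝ))) = c j • (fun y => f (y - (j:ℝ))) := by
      funext y; simp [smul_eq_mul]
    rw [e1, eLpNorm_const_smul]
    congr 1
    exact eLpNorm_comp_measurePreserving hf2.1 (measurePreserving_sub_right volume (j:ℝ))
  have hFbound : ∀ n, eLpNorm (F n) 2 volume ≤ ENNReal.ofReal T * Φ := by
    intro n
    set s := Finset.Icc (-(n:ℤ)) (n:ℤ)
    have e1 : F n = ∑ j ∈ s, (fun y => c j * f (y - (j:ℝ))) := by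
      funext y; simp [hF, s]
    rw [e1]
    calc eLpNorm (∑ j ∈ s, (fun y => c j * f (y - (j:ℝ)))) 2 volume
        ≤ ∑ j ∈ s, eLpNorm (fun y => c j * f (y - (j:ℝ))) 2 volume :=
          eLpNorm_sum_le (fun j _ => (continuous_const.mul
            (hfc.comp (continuous_sub_right _))).aestronglyMeasurable) one_le_two
      _ = (∑ j ∈ s, (‖c j‖₊ : ℝ≥0∞)) * Φ := by
          rw [Finset.sum_mul]; exact Finset.sum_congr rfl fun j _ => hterm j
      _ ≤ ENNReal.ofReal T * Φ := by
          apply mul_le_mul_left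
          have e2 : (∑ j ∈ s, (‖c j‖₊ : ℝ≥0∞)) = ENNReal.ofReal (∑ j ∈ s, |c j|) := by
            rw [ENNReal.ofReal_sum_of_nonneg (fun j _ => abs_nonneg _)]
            exact Finset.sum_congr rfl fun j _ => by
              rw [← Real.norm_eq_abs, ofReal_norm]; rfl
          rw [e2]
          exact ENNReal.ofReal_le_ofReal (Summable.sum_le_tsum s (fun j _ => abs_nonneg _) hc)
  have hgbound : eLpNorm g 2 volume ≤ ENNReal.ofReal T * Φ := by
    refine le_trans (Lp.eLpNorm_lim_le_liminf_eLpNorm hFmeas g (ae_of_all _ htend)) ?_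
    refine le_trans (Filter.liminf_le_liminf (Eventually.of_forall hFbound)) ?_
    simp [Filter.liminf_const]
  exact ⟨⟨hgc.aestronglyMeasurable, lt_of_le_of_lt hgbound
    (ENNReal.mul_lt_top ENNReal.ofReal_lt_top hf2.2)⟩, hgbound⟩
/-- One half of the statement: results for `y ↦ Σ_j φt(x₁−j) φ(y−j)`. -/
lemma wk_half (ε C₁ C₂ : ℝ) (hε : 0 < ε) (hC₁ : 0 < C₁) (hC₂ : 0 < C₂)
    (φ φt : ℝ → ℝ) (hφc : Continuous φ) (hφtc : Continuous φt)
    (hφ : ∀ t : ℝ, |φ t| ≤ C₁ / (1 + |t|) ^ (1 + ε))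
    (hφt : ∀ t : ℝ, |φt t| ≤ C₂ / (1 + |t|) ^ (1 + ε)) :
    (∀ x₁ : ℝ, MemLp (fun y => ∑' j : ℤ, φt (x₁ - j) * φ (y - j)) 2 volume) ∧
    (∀ K : Set ℝ, IsCompact K → ∃ M : ℝ≥0∞, M < ⊤ ∧
      ∀ x₁ ∈ K, eLpNorm (fun y => ∑' j : ℤ, φt (x₁ - j) * φ (y - j)) 2 volume ≤ M) := by
  -- basic facts
  have hφ2 : MemLp φ 2 volume := wk_memL2 ε C₁ hε hC₁ φ hφc hφ
  have hφb : ∀ t : ℝ, |φ t| ≤ C₁ := fun t => le_trans (hφ t) (by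
    rw [div_le_iff₀ (by positivity)]
    nlinarith [Real.one_le_rpow (show (1:ℝ) ≤ 1 + |t| by nlinarith [abs_nonneg t])
      (show (0:ℝ) ≤ 1 + ε by linarith)])
  have hdecay : ∀ t : ℝ, C₂ / (1 + |t|) ^ (1 + ε) = C₂ * (1 + |t|) ^ (-(1+ε)) := fun t => by
    rw [Real.rpow_neg (by positivity), div_eq_mul_inv]
  set S := ∑' j : ℤ, ((1:ℝ) + |(j:ℝ)|) ^ (-(1+ε)) with hSdef
  have hSsum := wk_summable_base ε hε
  have hS0 : 0 ≤ S := tsum_nonneg fun j => Real.rpow_nonneg (by positivity) _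
  -- coefficient summability for each x
  have hcsum : ∀ x : ℝ, Summable fun j : ℤ => |φt (x - j)| := by
    intro x
    apply Summable.of_nonneg_of_le (fun j => abs_nonneg _)
      (fun j => ?_) ((hSsum.mul_left (C₂ * (1 + |x|) ^ (1+ε))))
    calc |φt (x - j)| ≤ C₂ * (1 + |x - j|) ^ (-(1+ε)) := by rw [← hdecay]; exact hφt _
      _ ≤ C₂ * ((1 + |x|) ^ (1+ε) * (1 + |(j:ℝ)|) ^ (-(1+ε))) :=
          mul_le_mul_of_nonneg_left (wk_shift_bound ε x hε j) hC₂.le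
      _ = C₂ * (1 + |x|) ^ (1+ε) * (1 + |(j:ℝ)|) ^ (-(1+ε)) := by ring
  have hctsum : ∀ x : ℝ, (∑' j : ℤ, |φt (x - j)|) ≤ C₂ * (1 + |x|) ^ (1+ε) * S := by
    intro x
    calc (∑' j : ℤ, |φt (x - j)|)
        ≤ ∑' j : ℤ, C₂ * (1 + |x|) ^ (1+ε) * (1 + |(j:ℝ)|) ^ (-(1+ε)) := by
          apply Summable.tsum_le_tsum _ (hcsum x) (hSsum.mul_left _)
          intro j
          calc |φt (x - j)| ≤ C₂ * (1 + |x - j|) ^ (-(1+ε)) := by rw [← hdecay]; exact hφt _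
            _ ≤ C₂ * ((1 + |x|) ^ (1+ε) * (1 + |(j:ℝ)|) ^ (-(1+ε))) :=
                mul_le_mul_of_nonneg_left (wk_shift_bound ε x hε j) hC₂.le
            _ = C₂ * (1 + |x|) ^ (1+ε) * (1 + |(j:ℝ)|) ^ (-(1+ε)) := by ring
      _ = C₂ * (1 + |x|) ^ (1+ε) * S := by rw [tsum_mul_left]
  constructor
  · intro x₁
    exact (wk_main (fun j => φt (x₁ - j)) (hcsum x₁) C₁ hC₁.le φ hφc hφb hφ2).1
  · intro K hK
    obtain ⟨r, hr⟩ := hK.isBounded.subset_closedBall 0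
    refine ⟨ENNReal.ofReal (C₂ * (1 + r) ^ (1+ε) * S) * eLpNorm φ 2 volume,
      ENNReal.mul_lt_top ENNReal.ofReal_lt_top hφ2.2, fun x₁ hx₁ => ?_⟩
    have hx : |x₁| ≤ r := by simpa [Real.dist_eq] using hr hx₁
    refine le_trans (wk_main (fun j => φt (x₁ - j)) (hcsum x₁) C₁ hC₁.le φ hφc hφb hφ2).2 ?_
    apply mul_le_mul_left
    apply ENNReal.ofReal_le_ofReal
    refine le_trans (hctsum x₁) ?_
    apply mul_le_mul_of_nonneg_right _ hS0
    apply mul_le_mul_of_nonneg_left _ hC₂.le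
    exact Real.rpow_le_rpow (by positivity) (by linarith) (by linarith)

/-- Let `ε > 0` and let `φ, φ̃ : ℝ → ℝ` be continuous functions with the decay
`|φ(t)| ≤ C₁(1+|t|)^{−1−ε}`, `|φ̃(t)| ≤ C₂(1+|t|)^{−1−ε}`.  Define
`q(x,y) = Σ_{j∈ℤ} φ̃(x−j)·φ(y−j)`.  Then for every fixed `x₁ ∈ ℝ` the function `y ↦ q(x₁,y)`
belongs to `L²(ℝ)`, with `L²`-norm bounded uniformly for `x₁` in any compact subset of `ℝ`;
analogously for `x ↦ q(x,y₁)`, uniformly for `y₁` in compact sets. -/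
theorem statement1
    (ε C₁ C₂ : ℝ) (hε : 0 < ε) (hC₁ : 0 < C₁) (hC₂ : 0 < C₂)
    (φ φt : ℝ → ℝ) (hφc : Continuous φ) (hφtc : Continuous φt)
    (hφ : ∀ t : ℝ, |φ t| ≤ C₁ / (1 + |t|) ^ (1 + ε))
    (hφt : ∀ t : ℝ, |φt t| ≤ C₂ / (1 + |t|) ^ (1 + ε)) :
    (∀ x₁ : ℝ, MemLp (fun y => qker φ φt x₁ y) 2 volume) ∧
    (∀ K : Set ℝ, IsCompact K → ∃ M : ℝ≥0∞, M < ⊤ ∧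
      ∀ x₁ ∈ K, eLpNorm (fun y => qker φ φt x₁ y) 2 volume ≤ M) ∧
    (∀ y₁ : ℝ, MemLp (fun x => qker φ φt x y₁) 2 volume) ∧
    (∀ K : Set ℝ, IsCompact K → ∃ M : ℝ≥0∞, M < ⊤ ∧
      ∀ y₁ ∈ K, eLpNorm (fun x => qker φ φt x y₁) 2 volume ≤ M) := by
  have h1 := wk_half ε C₁ C₂ hε hC₁ hC₂ φ φt hφc hφtc hφ hφt
  have h2 := wk_half ε C₂ C₁ hε hC₂ hC₁ φt φ hφtc hφc hφt hφ
  have e : ∀ y₁ : ℝ, (fun x => qker φ φt x y₁) = (fun x => ∑' j : ℤ, φ (y₁ - j) * φt (x - j)) := by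
    intro y₁; funext x; exact tsum_congr fun j => mul_comm _ _
  refine ⟨fun x₁ => h1.1 x₁, h1.2, fun y₁ => ?_, fun K hK => ?_⟩
  · rw [e y₁]; exact h2.1 y₁
  · obtain ⟨M, hM, hMb⟩ := h2.2 K hK
    exact ⟨M, hM, fun y₁ hy₁ => by rw [e y₁]; exact hMb y₁ hy₁⟩
end
end

section
/- Let m ≥ 2 be an even integer, let v₁, …, v_m be negative real numbers satisfying v_j · v_{m+1−j} = 1 for j = 1, …, m, let D be a nonzero complex number, and let P(λ) = D·∏_{j=1}^{m} (λ − v_j). Then for every ξ ∈ ℝ one has |P(−1)| ≤ |P(e^{iξ})| ≤ |P(1)|. -/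
lemma key_factor (w : ℝ) (hw : w < 0) (ξ : ℝ) :
    ‖(-1 : ℂ) - w‖ ≤ ‖Complex.exp (Complex.I * ξ) - w‖ ∧
    ‖Complex.exp (Complex.I * ξ) - w‖ ≤ ‖(1 : ℂ) - w‖ := by
  have hre : (Complex.exp (Complex.I * ξ)).re = Real.cos ξ := by
    rw [mul_comm]; exact Complex.exp_ofReal_mul_I_re ξ
  have him : (Complex.exp (Complex.I * ξ)).im = Real.sin ξ := by
    rw [mul_comm]; exact Complex.exp_ofReal_mul_I_im ξ
  have hc1 : Real.cos ξ ≤ 1 := Real.cos_le_one ξ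
  have hc2 : -1 ≤ Real.cos ξ := Real.neg_one_le_cos ξ
  have hs : Real.sin ξ ^ 2 = 1 - Real.cos ξ ^ 2 := Real.sin_sq ξ
  simp only [Complex.norm_def]
  constructor
  · apply Real.sqrt_le_sqrt
    simp only [Complex.normSq_apply, Complex.sub_re, Complex.sub_im, hre, him,
      Complex.ofReal_re, Complex.ofReal_im, Complex.neg_re, Complex.neg_im,
      Complex.one_re, Complex.one_im]
    nlinarith [sq_nonneg (Real.sin ξ)]
  · apply Real.sqrt_le_sqrt
    simp only [Complex.normSq_apply, Complex.sub_re, Complex.sub_im, hre, him,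
      Complex.ofReal_re, Complex.ofReal_im, Complex.one_re, Complex.one_im]
    nlinarith [sq_nonneg (Real.sin ξ)]

/-- Let `m ≥ 2` be an even integer, `v₁, …, v_m` negative reals with
`v_j · v_{m+1−j} = 1` for `j = 1, …, m`, `D ≠ 0` complex, and
`P(λ) = D·∏_{j=1}^m (λ − v_j)`.  Then for every `ξ ∈ ℝ`,
`|P(−1)| ≤ |P(e^{iξ})| ≤ |P(1)|`. -/
theorem statement7
    (m : ℕ) (hm : 2 ≤ m) (hme : Even m)
    (v : ℕ → ℝ)
    (hneg : ∀ j : ℕ, 1 ≤ j → j ≤ m → v j < 0)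
    (hpair : ∀ j : ℕ, 1 ≤ j → j ≤ m → v j * v (m + 1 - j) = 1)
    (D : ℂ) (hD : D ≠ 0)
    (P : ℂ → ℂ) (hP : ∀ lam : ℂ, P lam = D * ∏ j ∈ Finset.Icc 1 m, (lam - (v j : ℂ))) :
    ∀ ξ : ℝ,
      ‖P (-1)‖ ≤ ‖P (Complex.exp (Complex.I * ξ))‖ ∧
      ‖P (Complex.exp (Complex.I * ξ))‖ ≤ ‖P 1‖ := by
  intro ξ
  have habs : ∀ lam : ℂ, ‖P lam‖
      = ‖D‖ * ∏ j ∈ Finset.Icc 1 m, ‖lam - (v j : ℂ)‖ := by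
    intro lam
    rw [hP, norm_mul, norm_prod]
  rw [habs, habs, habs]
  have hkey : ∀ j ∈ Finset.Icc 1 m,
      ‖(-1 : ℂ) - v j‖ ≤ ‖Complex.exp (Complex.I * ξ) - v j‖ ∧
      ‖Complex.exp (Complex.I * ξ) - v j‖ ≤ ‖(1 : ℂ) - v j‖ := by
    intro j hj
    rw [Finset.mem_Icc] at hj
    exact key_factor (v j) (hneg j hj.1 hj.2) ξ
  constructor
  · apply mul_le_mul_of_nonneg_left _ (norm_nonneg D)
    exact Finset.prod_le_prod (fun j _ => norm_nonneg _) (fun j hj => (hkey j hj).1)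
  · apply mul_le_mul_of_nonneg_left _ (norm_nonneg D)
    exact Finset.prod_le_prod (fun j _ => norm_nonneg _) (fun j hj => (hkey j hj).2)
end

section
/- Fix an integer p ≥ 1, set N = 2p, and let λ₁, …, λ_N be real numbers whose multiset is symmetric, i.e. {λ₁, …, λ_N} = {−λ₁, …, −λ_N} as multisets. Let Q : ℝ → ℝ be a continuous function supported in the interval [0, N] whose Fourier transform satisfies 𝓕Q(ξ) = ∫_ℝ e^{−iξt} Q(t) dt = ∏_{j=1}^{N} (e^{−λ_j} − e^{−iξ})/(iξ − λ_j) for every ξ ∈ ℝ with iξ ≠ λ_j for all j. Then the function φ*(ξ) := Σ_{j∈ℤ} Q(j)·e^{−iξj} (a finite sum, since Q is supported in [0,N]) satisfies φ*(ξ) ≠ 0 for every ξ ∈ ℝ. -/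
open MeasureTheory

namespace Statement9Aux

open Complex Filter
open scoped Real FourierTransform

noncomputable def fct (l w : ℝ) : ℂ :=
  (Complex.exp (-(l:ℂ)) - Complex.exp (-(Complex.I * w))) / (Complex.I * (w:ℂ) - (l:ℂ))

lemma den_ne (l w : ℝ) (h : w ≠ 0 ∨ l ≠ 0) : Complex.I * (w:ℂ) - (l:ℂ) ≠ 0 := by
  intro hc
  have h1 := congrArg Complex.re hc
  have h2 := congrArg Complex.im hc
  simp at h1 h2
  rcases h with h | h
  · exact h h2
  · exact h h1

lemma cont_fct (l : ℝ) (hl : l ≠ 0) : Continuous fun w : ℝ => fct l w := by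
  apply Continuous.div
  · fun_prop
  · fun_prop
  · exact fun w => den_ne l w (Or.inr hl)

lemma exp_I_norm (w : ℝ) : ‖Complex.exp (-(Complex.I * (w:ℂ)))‖ = 1 := by
  rw [Complex.norm_exp]; simp

lemma exp_I_norm' (x : ℂ) (hx : x.re = 0) : ‖Complex.exp x‖ = 1 := by
  rw [Complex.norm_exp, hx, Real.exp_zero]

lemma norm_fct_le (l w : ℝ) (hw : 1 ≤ |w|) : ‖fct l w‖ ≤ (Real.exp (-l) + 1) / |w| := by
  rw [fct, norm_div]
  apply div_le_div₀ (by positivity)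
  · refine (norm_sub_le _ _).trans ?_
    rw [exp_I_norm, Complex.norm_exp]
    simp
  · linarith
  · calc |w| = |(Complex.I * (w:ℂ) - (l:ℂ)).im| := by simp
      _ ≤ ‖Complex.I * (w:ℂ) - (l:ℂ)‖ := Complex.abs_im_le_norm _

lemma pair (l w : ℝ) (h : w ≠ 0 ∨ l ≠ 0) :
    fct l w * fct (-l) w =
      Complex.exp (-(Complex.I * w)) * ((2 * (Real.cosh l - Real.cos w) / (w^2 + l^2) : ℝ) : ℂ) := by
  have hwl : ((w:ℂ)^2 + (l:ℂ)^2) ≠ 0 := by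
    have : ((w^2 + l^2 : ℝ) : ℂ) ≠ 0 := by
      rw [Complex.ofReal_ne_zero]; rcases h with h | h <;> positivity
    push_cast at this; exact this
  have hden : (Complex.I * (w:ℂ) - (l:ℂ)) * (Complex.I * (w:ℂ) - ((-l:ℝ):ℂ)) = -((w:ℂ)^2 + (l:ℂ)^2) := by
    push_cast
    linear_combination ((w:ℂ)^2) * Complex.I_sq
  have hac : Complex.exp (-(l:ℂ)) * Complex.exp ((l:ℂ)) = 1 := by
    rw [← Complex.exp_add]; simp
  have hbd : Complex.exp (-(Complex.I * (w:ℂ))) * Complex.exp (Complex.I * (w:ℂ)) = 1 := by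
    rw [← Complex.exp_add]; simp
  rw [fct, fct, div_mul_div_comm, hden, div_neg]
  push_cast
  rw [neg_neg, Complex.cosh, Complex.cos]
  rw [show ((w:ℂ) * Complex.I) = Complex.I * (w:ℂ) by ring,
      show (-(w:ℂ) * Complex.I) = -(Complex.I * (w:ℂ)) by ring]
  field_simp [hwl]
  linear_combination -hac + hbd

lemma fct0 (w : ℝ) (hw : w ≠ 0) :
    fct 0 w = Complex.exp (-(Complex.I * w) / 2) * ((2 * Real.sin (w/2) / w : ℝ) : ℂ) := by
  have hwc : (w:ℂ) ≠ 0 := Complex.ofReal_ne_zero.mpr hw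
  have h1 : Complex.exp (-(Complex.I * w) / 2) * Complex.exp ((Complex.I * w) / 2) = 1 := by
    rw [← Complex.exp_add]; ring_nf; exact Complex.exp_zero
  have h2 : Complex.exp (-(Complex.I * w) / 2) * Complex.exp (-(Complex.I * w) / 2)
      = Complex.exp (-(Complex.I * w)) := by
    rw [← Complex.exp_add]; ring_nf
  rw [fct]
  push_cast
  rw [Complex.sin]
  rw [show (-((w:ℂ)/2) * Complex.I) = -(Complex.I * w) / 2 by ring,
      show (((w:ℂ)/2) * Complex.I) = (Complex.I * w) / 2 by ring]
  have hden : Complex.I * (w:ℂ) - 0 ≠ 0 := by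
    simpa using mul_ne_zero Complex.I_ne_zero hwc
  field_simp
  rw [neg_zero, Complex.exp_zero, show -(Complex.I * (w:ℂ) / 2) = -(Complex.I * (w:ℂ)) / 2 by ring]
  linear_combination ((w:ℂ) * Complex.I^2) * h1 - ((w:ℂ) * Complex.I^2) * h2 +
    ((w:ℂ) - (w:ℂ) * Complex.exp (-(Complex.I*(w:ℂ)))) * Complex.I_sq

lemma tendsto_sinc :
    Tendsto (fun w : ℝ => 2 * Real.sin (w/2) / w) (nhdsWithin 0 {0}ᶜ) (nhds 1) := by
  have hd : HasDerivAt Real.sin 1 0 := by simpa using Real.hasDerivAt_sin 0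
  rw [hasDerivAt_iff_tendsto_slope] at hd
  have h2 : Tendsto (fun w : ℝ => w / 2) (nhdsWithin 0 {0}ᶜ) (nhdsWithin 0 {0}ᶜ) := by
    rw [tendsto_nhdsWithin_iff]
    constructor
    · have : Tendsto (fun w : ℝ => w / 2) (nhds (0:ℝ)) (nhds ((0:ℝ)/2)) :=
        tendsto_id.div_const 2
      simpa using this.mono_left nhdsWithin_le_nhds
    · filter_upwards [self_mem_nhdsWithin] with w hw
      simp only [Set.mem_compl_iff, Set.mem_singleton_iff] at *
      intro h
      rcases div_eq_zero_iff.mp h with h' | h'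
      · exact hw h'
      · norm_num at h'
  have key := hd.comp h2
  apply key.congr'
  filter_upwards [self_mem_nhdsWithin] with w hw
  have hw' : (w:ℝ) ≠ 0 := hw
  simp only [Function.comp_apply, slope, Real.sin_zero, vsub_eq_sub, sub_zero, smul_eq_mul]
  field_simp

lemma pos_of_cont {f : ℝ → ℝ} (hf : Continuous f) (hne : ∀ x, f x ≠ 0) (h0 : 0 < f 0) :
    ∀ x, 0 < f x := by
  intro x
  by_contra hx
  push_neg at hx
  have hx' : f x < 0 := lt_of_le_of_ne hx (hne x)
  have : (0:ℝ) ∈ Set.uIcc (f x) (f 0) := Set.mem_uIcc.mpr (Or.inl ⟨hx'.le, h0.le⟩)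
  obtain ⟨c, _, hc⟩ := intermediate_value_uIcc (f := f) (hf.continuousOn) this
  exact hne c hc

lemma poisson (f : ℝ → ℂ) (hf : Continuous f) (M : ℝ) (hM : 0 ≤ M)
    (h0 : ∀ x : ℝ, x ∉ Set.Icc 0 M → f x = 0)
    (hsum : Summable fun n : ℤ => 𝓕 f n) :
    ∑' n : ℤ, f n = ∑' n : ℤ, 𝓕 f n := by
  have h_norm : ∀ K : TopologicalSpace.Compacts ℝ,
      Summable fun n : ℤ => ‖((⟨f, hf⟩ : C(ℝ, ℂ)).comp <| ContinuousMap.addRight n).restrict K‖ := by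
    intro K
    obtain ⟨r, hr⟩ := K.isCompact.isBounded.subset_closedBall 0
    apply summable_of_finite_support
    have : Function.support (fun n : ℤ =>
        ‖((⟨f, hf⟩ : C(ℝ, ℂ)).comp <| ContinuousMap.addRight n).restrict K‖) ⊆
        Set.Icc (-(⌈M + r⌉)) ⌈M + r⌉ := by
      intro n hn
      rw [Function.mem_support] at hn
      by_contra hmem
      apply hn
      rw [norm_eq_zero]
      ext ⟨x, hx⟩
      have hxr : |x| ≤ r := by
        have := hr hx
        simpa [Real.dist_eq] using Metric.mem_closedBall.mp this
      simp only [ContinuousMap.restrict_apply, ContinuousMap.comp_apply,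
        ContinuousMap.coe_addRight, ContinuousMap.coe_mk, ContinuousMap.zero_apply]
      apply h0
      intro ⟨hb1, hb2⟩
      apply hmem
      simp only [Set.mem_Icc] at *
      constructor
      · have h1 : ((-n : ℤ) : ℝ) ≤ M + r := by
          push_cast
          have := abs_le.mp hxr
          linarith
        have h2 : (-n : ℤ) ≤ ⌈M + r⌉ := by exact_mod_cast h1.trans (Int.le_ceil _)
        omega
      · have h1 : ((n : ℤ) : ℝ) ≤ M + r := by
          have := abs_le.mp hxr
          linarith
        exact_mod_cast h1.trans (Int.le_ceil _)
    exact Set.Finite.subset (Set.finite_Icc _ _) this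
  have h := Real.tsum_eq_tsum_fourier h_norm hsum 0
  simp only [ContinuousMap.coe_mk, zero_add] at h
  rw [h]
  congr 1
  ext n
  rw [show ((0:ℝ) : UnitAddCircle) = 0 by norm_num, fourier_eval_zero, mul_one]

lemma summable_shift (g : ℝ → ℂ) (C ξ : ℝ) (hC : 0 ≤ C)
    (hbound : ∀ w : ℝ, 1 ≤ |w| → ‖g w‖ ≤ C / w^2) :
    Summable fun n : ℤ => g (ξ + 2 * Real.pi * n) := by
  apply Summable.of_norm_bounded_eventually (g := fun n : ℤ => C / (n:ℝ)^2)
  · have base : Summable fun n : ℤ => 1 / (n:ℝ)^2 :=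
      Real.summable_one_div_int_pow.mpr one_lt_two
    have := base.mul_left C
    apply this.congr
    intro n
    ring
  · rw [Filter.eventually_cofinite]
    set n₀ : ℤ := max 1 ⌈|ξ|⌉ with hn₀
    apply Set.Finite.subset (Set.finite_Icc (-n₀) n₀)
    intro n hn
    simp only [Set.mem_setOf_eq] at hn
    by_contra hmem
    apply hn
    simp only [Set.mem_Icc, not_and_or, not_le] at hmem
    have hn₀pos : (0:ℤ) < n₀ := lt_of_lt_of_le zero_lt_one (le_max_left _ _)
    have habs : n₀ ≤ |n| := by
      rcases hmem with h | h
      · rw [abs_of_neg (by omega)]; omega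
      · rw [abs_of_pos (by omega)]; omega
    have h1 : (1:ℝ) ≤ |(n:ℝ)| := by
      have h : (1:ℤ) ≤ |n| := le_trans (le_max_left _ _) habs
      exact_mod_cast h
    have h2 : |ξ| ≤ |(n:ℝ)| := by
      have hc : (⌈|ξ|⌉ : ℤ) ≤ |n| := le_trans (le_max_right _ _) habs
      have hc2 : ((⌈|ξ|⌉ : ℤ) : ℝ) ≤ |(n:ℝ)| := by exact_mod_cast hc
      linarith [Int.le_ceil |ξ|]
    have hpi := Real.pi_gt_three
    have habs2 : |2 * Real.pi * (n:ℝ)| = 2 * Real.pi * |(n:ℝ)| := by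
      rw [abs_mul]
      congr 1
      rw [abs_of_pos (by linarith)]
    have htri : |2 * Real.pi * (n:ℝ)| ≤ |ξ + 2 * Real.pi * n| + |ξ| := by
      calc |2 * Real.pi * (n:ℝ)| = |(ξ + 2 * Real.pi * n) + (-ξ)| := by ring_nf
        _ ≤ |ξ + 2 * Real.pi * n| + |(-ξ)| := abs_add_le _ _
        _ = |ξ + 2 * Real.pi * n| + |ξ| := by rw [abs_neg]
    have hw1 : 1 ≤ |ξ + 2 * Real.pi * n| := by
      rw [habs2] at htri
      nlinarith [abs_nonneg (n:ℝ)]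
    have hw2 : |(n:ℝ)| ≤ |ξ + 2 * Real.pi * n| := by
      rw [habs2] at htri
      nlinarith [abs_nonneg (n:ℝ)]
    calc ‖g (ξ + 2 * Real.pi * n)‖ ≤ C / (ξ + 2 * Real.pi * n)^2 := hbound _ hw1
      _ ≤ C / (n:ℝ)^2 := by
          apply div_le_div_of_nonneg_left hC
          · nlinarith [_root_.sq_abs (n:ℝ)]
          · nlinarith [_root_.sq_abs (n:ℝ), _root_.sq_abs (ξ + 2*Real.pi*n),
              abs_nonneg (n:ℝ), abs_nonneg (ξ + 2*Real.pi*n)]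

end Statement9Aux

open Statement9Aux Complex Filter
open scoped Real FourierTransform

/-- Let `p ≥ 1`, `N = 2p`, and let `λ₁, …, λ_N` be real numbers forming a
symmetric multiset (`{λ_j} = {−λ_j}`).  Let `Q : ℝ → ℝ` be continuous, supported in `[0, N]`,
with Fourier transform `𝓕Q(ξ) = ∏_{j=1}^N (e^{−λ_j} − e^{−iξ})/(iξ − λ_j)` (for `iξ ≠ λ_j`).
Then `φ*(ξ) := Σ_{j∈ℤ} Q(j)·e^{−iξj} ≠ 0` for every `ξ ∈ ℝ`. -/
theorem statement9
    (p : ℕ) (hp : 1 ≤ p)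
    (lam : Fin (2 * p) → ℝ)
    (hsym : ∃ σ : Equiv.Perm (Fin (2 * p)), ∀ j, lam (σ j) = -lam j)
    (Q : ℝ → ℝ) (hQc : Continuous Q)
    (hQsupp : Function.support Q ⊆ Set.Icc (0 : ℝ) (2 * p : ℝ))
    (hQF : ∀ ξ : ℝ, (∀ j, Complex.I * (ξ : ℂ) ≠ (lam j : ℂ)) →
      (∫ t : ℝ, Complex.exp (-(Complex.I * ξ * t)) * Q t) =
        ∏ j, (Complex.exp (-(lam j : ℂ)) - Complex.exp (-(Complex.I * ξ))) /
          (Complex.I * ξ - (lam j : ℂ))) :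
    ∀ ξ : ℝ, (∑' j : ℤ, (Q j : ℂ) * Complex.exp (-(Complex.I * ξ * j))) ≠ 0 := by
  classical
  obtain ⟨σ, hσ⟩ := hsym
  have hNR : (0:ℝ) ≤ 2 * p := by positivity
  set F : ℝ → ℂ := fun w => ∫ t : ℝ, Complex.exp (-(Complex.I * w * t)) * (Q t : ℂ) with hFdef
  have hQF' : ∀ w : ℝ, w ≠ 0 → F w = ∏ j, fct (lam j) w := by
    intro w hw
    simp only [hFdef, fct]
    apply hQF
    intro j hj
    apply hw
    have := congrArg Complex.im hj
    simpa using this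
  have hQ0 : ∀ x : ℝ, x ∉ Set.Icc (0:ℝ) (2*p:ℝ) → Q x = 0 := by
    intro x hx
    by_contra h
    exact hx (hQsupp h)
  have hQc' : Continuous fun t : ℝ => (Q t : ℂ) := Complex.continuous_ofReal.comp hQc
  have hcs : HasCompactSupport fun t : ℝ => (Q t : ℂ) := by
    apply HasCompactSupport.intro (isCompact_Icc (a := (0:ℝ)) (b := (2*p:ℝ)))
    intro x hx
    simp [hQ0 x hx]
  have hQi : Integrable fun t : ℝ => (Q t : ℂ) := hQc'.integrable_of_hasCompactSupport hcs
  have hFc : Continuous F := by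
    rw [hFdef]
    apply continuous_of_dominated (bound := fun t => ‖(Q t : ℂ)‖)
    · intro w
      apply Continuous.aestronglyMeasurable
      fun_prop
    · intro w
      filter_upwards with t
      rw [norm_mul, exp_I_norm' _ (by simp), one_mul]
    · exact hQi.norm
    · filter_upwards with t
      fun_prop
  set C : ℝ := ∏ j, (Real.exp (-(lam j)) + 1) with hCdef
  have hC : 0 ≤ C := Finset.prod_nonneg (fun j _ => by positivity)
  have hFbound : ∀ w : ℝ, 1 ≤ |w| → ‖F w‖ ≤ C / w^2 := by
    intro w hw
    have hw0 : w ≠ 0 := by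
      intro h
      rw [h] at hw
      simp at hw
      linarith
    rw [hQF' w hw0, norm_prod]
    calc (∏ j, ‖fct  (lam j) w‖)
        ≤ ∏ j, (Real.exp (-(lam j)) + 1) / |w| := by
          apply Finset.prod_le_prod (fun j _ => norm_nonneg _)
          intro j _
          exact norm_fct_le (lam j) w hw
      _ = C / |w| ^ (2*p) := by
          rw [Finset.prod_div_distrib, Finset.prod_const, hCdef]
          simp
      _ ≤ C / w^2 := by
          apply div_le_div_of_nonneg_left hC (by positivity)
          calc w^2 = |w|^2 := (_root_.sq_abs w).symm
            _ ≤ |w|^(2*p) := pow_le_pow_right₀ hw (by omega)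
  -- filtered index sets
  set Z : Finset (Fin (2*p)) := Finset.univ.filter (fun j => lam j = 0) with hZdef
  set NZ : Finset (Fin (2*p)) := Finset.univ.filter (fun j => ¬ lam j = 0) with hNZdef
  set z : ℕ := Z.card with hzdef
  set m : ℕ := NZ.card with hmdef
  have hNZmem : ∀ j ∈ NZ, lam j ≠ 0 := by
    intro j hj
    exact (Finset.mem_filter.mp hj).2
  have hzm : z + m = 2 * p := by
    rw [hzdef, hmdef, hZdef, hNZdef, Finset.card_filter_add_card_filter_not]
    simp
  have hm_even : Even m := by
    have hcard : (Finset.univ.filter (fun j => 0 < lam j)).card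
        = (Finset.univ.filter (fun j => lam j < 0)).card := by
      apply Finset.card_bij' (fun j _ => σ j) (fun j _ => σ⁻¹ j)
      · intro a ha
        simp only [Finset.mem_filter, Finset.mem_univ, true_and] at *
        rw [hσ]
        linarith
      · intro a ha
        simp only [Finset.mem_filter, Finset.mem_univ, true_and] at *
        have h2 := hσ (σ⁻¹ a)
        rw [← Equiv.Perm.mul_apply, mul_inv_cancel, Equiv.Perm.one_apply] at h2
        linarith
      · intro a _
        simp
      · intro a _
        simp
    have hunion : NZ = (Finset.univ.filter (fun j => 0 < lam j)) ∪ (Finset.univ.filter (fun j => lam j < 0)) := by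
      ext j
      simp only [hNZdef, Finset.mem_filter, Finset.mem_univ, true_and, Finset.mem_union]
      constructor
      · intro h
        rcases lt_or_gt_of_ne h with h' | h'
        · exact Or.inr h'
        · exact Or.inl h'
      · intro h
        rcases h with h | h
        · exact ne_of_gt h
        · exact ne_of_lt h
    have hdisj : Disjoint (Finset.univ.filter (fun j => 0 < lam j)) (Finset.univ.filter (fun j => lam j < 0)) := by
      rw [Finset.disjoint_left]
      intro a ha hb
      simp only [Finset.mem_filter, Finset.mem_univ, true_and] at ha hb
      linarith
    rw [hmdef, hunion, Finset.card_union_of_disjoint hdisj, hcard]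
    exact ⟨_, rfl⟩
  have hz_even : Even z := (Nat.even_add.mp (hzm ▸ even_two_mul p)).mpr hm_even
  -- the function A
  set A : ℝ → ℂ := fun w => Complex.exp (Complex.I * w * m / 2) * ∏ j ∈ NZ, fct (lam j) w with hAdef
  have hA_cont : Continuous A := by
    apply Continuous.mul
    · fun_prop
    · apply continuous_finset_prod
      intro j hj
      exact cont_fct (lam j) (hNZmem j hj)
  have hperm : ∀ w : ℝ, ∏ j ∈ NZ, fct (lam j) w = ∏ j ∈ NZ, fct (-(lam j)) w := by
    intro w
    apply Finset.prod_bij' (fun j _ => σ j) (fun j _ => σ⁻¹ j)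
    · intro a ha
      simp only [hNZdef, Finset.mem_filter, Finset.mem_univ, true_and] at *
      rw [hσ]
      simpa using ha
    · intro a ha
      simp only [hNZdef, Finset.mem_filter, Finset.mem_univ, true_and] at *
      have h2 := hσ (σ⁻¹ a)
      rw [← Equiv.Perm.mul_apply, mul_inv_cancel, Equiv.Perm.one_apply] at h2
      intro hc
      rw [hc] at h2
      simp at h2
      exact ha h2
    · intro a _
      simp
    · intro a _
      simp
    · intro a ha
      rw [hσ, neg_neg]
  set rr : ℝ → ℝ := fun w => ∏ j ∈ NZ, (2 * (Real.cosh (lam j) - Real.cos w) / (w^2 + (lam j)^2)) with hrrdef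
  have hrr_pos : ∀ w, 0 < rr w := by
    intro w
    apply Finset.prod_pos
    intro j hj
    have hl := hNZmem j hj
    have h1 : 1 < Real.cosh (lam j) := Real.one_lt_cosh.mpr hl
    have h2 : Real.cos w ≤ 1 := Real.cos_le_one w
    have h3 : 0 < w^2 + (lam j)^2 := by positivity
    exact div_pos (by linarith) h3
  have hA_sq : ∀ w, (A w)^2 = ((rr w : ℝ) : ℂ) := by
    intro w
    rw [hAdef]
    calc (Complex.exp (Complex.I * w * m / 2) * ∏ j ∈ NZ, fct (lam j) w)^2
        = Complex.exp (Complex.I * w * m / 2)^2 *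
            ((∏ j ∈ NZ, fct (lam j) w) * (∏ j ∈ NZ, fct (-(lam j)) w)) := by
          rw [← hperm w]; ring
      _ = Complex.exp (Complex.I * w * m / 2)^2 *
            ∏ j ∈ NZ, (fct (lam j) w * fct (-(lam j)) w) := by
          rw [Finset.prod_mul_distrib]
      _ = Complex.exp (Complex.I * w * m / 2)^2 *
            ∏ j ∈ NZ, (Complex.exp (-(Complex.I * w)) *
              ((2 * (Real.cosh (lam j) - Real.cos w) / (w^2 + (lam j)^2) : ℝ) : ℂ)) := by
          congr 1
          apply Finset.prod_congr rfl
          intro j hj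
          exact pair (lam j) w (Or.inr (hNZmem j hj))
      _ = (Complex.exp (Complex.I * w * m / 2)^2 * Complex.exp (-(Complex.I * w))^m) *
            ∏ j ∈ NZ, ((2 * (Real.cosh (lam j) - Real.cos w) / (w^2 + (lam j)^2) : ℝ) : ℂ) := by
          rw [Finset.prod_mul_distrib, Finset.prod_const, ← hmdef]
          ring
      _ = ∏ j ∈ NZ, ((2 * (Real.cosh (lam j) - Real.cos w) / (w^2 + (lam j)^2) : ℝ) : ℂ) := by
          have hone : Complex.exp (Complex.I * w * m / 2)^2 * Complex.exp (-(Complex.I * w))^m = 1 := by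
            rw [← Complex.exp_nat_mul, ← Complex.exp_nat_mul, ← Complex.exp_add]
            rw [show ((2:ℕ):ℂ) * (Complex.I * w * m / 2) + ((m:ℕ):ℂ) * (-(Complex.I * w)) = 0 by push_cast; ring]
            exact Complex.exp_zero
          rw [hone, one_mul]
      _ = ((rr w : ℝ) : ℂ) := by
          rw [hrrdef, Complex.ofReal_prod]
  set Ar : ℝ → ℝ := fun w => (A w).re with hArdef
  have hA_re : ∀ w, A w = ((Ar w : ℝ) : ℂ) := by
    intro w
    have h2 := hA_sq w
    have him : (A w ^ 2).im = 0 := by rw [h2]; simp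
    have hre : (A w ^ 2).re = rr w := by rw [h2]; simp
    rw [sq, Complex.mul_im] at him
    rw [sq, Complex.mul_re] at hre
    have hrrw := hrr_pos w
    apply Complex.ext
    · simp [hArdef]
    · simp only [Complex.ofReal_im]
      have hprod : (A w).re * (A w).im = 0 := by linarith
      rcases mul_eq_zero.mp hprod with h | h
      · exfalso
        rw [h] at hre
        nlinarith [sq_nonneg (A w).im]
      · exact h
  have hAr_cont : Continuous Ar := Complex.continuous_re.comp hA_cont
  have hAr_ne : ∀ w, Ar w ≠ 0 := by
    intro w h
    have h2 := hA_sq w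
    have hre : (A w ^ 2).re = rr w := by rw [h2]; simp
    rw [sq, Complex.mul_re] at hre
    have := hrr_pos w
    have h' : (A w).re = 0 := h
    nlinarith [sq_nonneg (A w).im]
  have hA0 : A 0 = ((∏ j ∈ NZ, ((1 - Real.exp (-(lam j))) / lam j) : ℝ) : ℂ) := by
    simp only [hAdef]
    rw [show Complex.I * ((0:ℝ):ℂ) * m / 2 = 0 by push_cast; ring, Complex.exp_zero, one_mul,
      Complex.ofReal_prod]
    apply Finset.prod_congr rfl
    intro j hj
    have hl : lam j ≠ 0 := hNZmem j hj
    have hlc : ((lam j : ℝ):ℂ) ≠ 0 := Complex.ofReal_ne_zero.mpr hl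
    rw [fct]
    rw [show Complex.I * ((0:ℝ):ℂ) = 0 by push_cast; ring]
    rw [show -(0:ℂ) = 0 by ring, Complex.exp_zero]
    push_cast
    rw [zero_sub, div_neg, ← neg_div, neg_sub]
  have hAr0 : 0 < Ar 0 := by
    have : Ar 0 = ∏ j ∈ NZ, ((1 - Real.exp (-(lam j))) / lam j) := by
      show (A 0).re = _
      rw [hA0, Complex.ofReal_re]
    rw [this]
    apply Finset.prod_pos
    intro j hj
    have hl : lam j ≠ 0 := hNZmem j hj
    rcases lt_or_gt_of_ne hl with h | h
    · apply div_pos_of_neg_of_neg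
      · have : 1 < Real.exp (-(lam j)) := by
          rw [show (1:ℝ) = Real.exp 0 by simp]
          exact Real.exp_lt_exp.mpr (by linarith)
        linarith
      · exact h
    · apply div_pos
      · have : Real.exp (-(lam j)) < 1 := by
          rw [show (1:ℝ) = Real.exp 0 by simp]
          exact Real.exp_lt_exp.mpr (by linarith)
        linarith
      · exact h
  have hAr_pos : ∀ w, 0 < Ar w := pos_of_cont hAr_cont hAr_ne hAr0
  -- u and g
  set u : ℝ → ℝ := fun w => if w = 0 then 1 else 2 * Real.sin (w/2) / w with hudef
  set g : ℝ → ℝ := fun w => Ar w * (u w)^z with hgdef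
  have hg_nonneg : ∀ w, 0 ≤ g w := fun w => mul_nonneg (hAr_pos w).le (hz_even.pow_nonneg _)
  have hg_pos : ∀ w, u w ≠ 0 → 0 < g w := fun w hu => mul_pos (hAr_pos w) (hz_even.pow_pos hu)
  -- structure of F
  have hNZprod : ∀ w : ℝ, ∏ j ∈ NZ, fct (lam j) w = Complex.exp (-(Complex.I * w * m / 2)) * A w := by
    intro w
    rw [hAdef, ← mul_assoc, ← Complex.exp_add]
    rw [show -(Complex.I * (w:ℂ) * m / 2) + Complex.I * w * m / 2 = 0 by ring]
    rw [Complex.exp_zero, one_mul]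
  have hZprod : ∀ w : ℝ, ∏ j ∈ Z, fct (lam j) w = (fct 0 w)^z := by
    intro w
    rw [hzdef, ← Finset.prod_const]
    apply Finset.prod_congr rfl
    intro j hj
    rw [(Finset.mem_filter.mp hj).2]
  have hexpz : ∀ w : ℝ, Complex.exp (-(Complex.I * w) / 2)^z * Complex.exp (-(Complex.I * w * m / 2))
      = Complex.exp (-(Complex.I * w * p)) := by
    intro w
    rw [← Complex.exp_nat_mul, ← Complex.exp_add]
    congr 1
    have hcast : (z:ℂ) + (m:ℂ) = 2 * (p:ℂ) := by exact_mod_cast congrArg (Nat.cast (R := ℂ)) hzm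
    linear_combination (-(Complex.I * (w:ℂ))/2) * hcast
  have key1 : ∀ w : ℝ, w ≠ 0 → F w = Complex.exp (-(Complex.I * w * p)) * ((g w : ℝ) : ℂ) := by
    intro w hw
    have huw : ((2 * Real.sin (w/2) / w : ℝ) : ℂ) = ((u w : ℝ) : ℂ) := by
      rw [hudef]
      simp [hw]
    have hgw : ((g w : ℝ) : ℂ) = ((Ar w : ℝ) : ℂ) * ((u w : ℝ) : ℂ)^z := by
      rw [hgdef]
      push_cast
      ring
    rw [hQF' w hw]
    rw [← Finset.prod_filter_mul_prod_filter_not Finset.univ (fun j => lam j = 0) (fun j => fct (lam j) w)]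
    rw [← hZdef, ← hNZdef, hZprod w, hNZprod w, fct0 w hw, huw, hgw]
    rw [hA_re w]
    calc (Complex.exp (-(Complex.I * w) / 2) * ((u w : ℝ):ℂ))^z *
          (Complex.exp (-(Complex.I * w * m / 2)) * ((Ar w : ℝ):ℂ))
        = (Complex.exp (-(Complex.I * w) / 2)^z * Complex.exp (-(Complex.I * w * m / 2))) *
            (((Ar w : ℝ):ℂ) * ((u w : ℝ):ℂ)^z) := by ring
      _ = Complex.exp (-(Complex.I * w * p)) * (((Ar w:ℝ):ℂ) * ((u w : ℝ):ℂ)^z) := by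
          rw [hexpz w]
  have hu0 : u 0 = 1 := by
    rw [hudef]
    simp
  have hF0 : F 0 = ((g 0 : ℝ) : ℂ) := by
    have hlim1 : Tendsto F (nhdsWithin 0 {0}ᶜ) (nhds (F 0)) :=
      (hFc.tendsto 0).mono_left nhdsWithin_le_nhds
    have hu : Tendsto u (nhdsWithin (0:ℝ) {0}ᶜ) (nhds 1) := by
      apply tendsto_sinc.congr'
      filter_upwards [self_mem_nhdsWithin] with w hw
      rw [hudef]
      simp only [if_neg (show w ≠ 0 from hw)]
    have hAr_t : Tendsto Ar (nhdsWithin (0:ℝ) {0}ᶜ) (nhds (Ar 0)) :=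
      (hAr_cont.tendsto 0).mono_left nhdsWithin_le_nhds
    have hg_t : Tendsto g (nhdsWithin (0:ℝ) {0}ᶜ) (nhds (g 0)) := by
      have h1 : Tendsto (fun w => Ar w * (u w)^z) (nhdsWithin (0:ℝ) {0}ᶜ) (nhds (Ar 0 * 1^z)) :=
        hAr_t.mul (hu.pow z)
      have hg0 : g 0 = Ar 0 * 1^z := by simp only [hgdef]; rw [hu0]
      rw [hg0]
      exact h1
    have hexp_t : Tendsto (fun w : ℝ => Complex.exp (-(Complex.I * w * p)))
        (nhdsWithin (0:ℝ) {0}ᶜ) (nhds 1) := by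
      have hc : Continuous fun w : ℝ => Complex.exp (-(Complex.I * w * p)) := by fun_prop
      have h0 : Complex.exp (-(Complex.I * ((0:ℝ):ℂ) * p)) = 1 := by norm_num
      have h1 := (hc.tendsto 0).mono_left (nhdsWithin_le_nhds (s := {0}ᶜ))
      rwa [h0] at h1
    have hgC_t : Tendsto (fun w : ℝ => ((g w : ℝ) : ℂ)) (nhdsWithin (0:ℝ) {0}ᶜ) (nhds ((g 0 : ℝ):ℂ)) :=
      (Complex.continuous_ofReal.tendsto _).comp hg_t
    have hlim2 : Tendsto F (nhdsWithin (0:ℝ) {0}ᶜ) (nhds (1 * ((g 0:ℝ):ℂ))) := by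
      apply (hexp_t.mul hgC_t).congr'
      filter_upwards [self_mem_nhdsWithin] with w hw
      exact (key1 w hw).symm
    have h2 := tendsto_nhds_unique hlim1 hlim2
    rwa [one_mul] at h2
  have key : ∀ w : ℝ, F w = Complex.exp (-(Complex.I * w * p)) * ((g w : ℝ) : ℂ) := by
    intro w
    by_cases hw : w = 0
    · subst hw
      rw [hF0, show -(Complex.I * ((0:ℝ):ℂ) * p) = 0 by norm_num, Complex.exp_zero, one_mul]
    · exact key1 w hw
  -- the final argument for each ξ
  intro ξ
  set fξ : ℝ → ℂ := fun t => Complex.exp (-(Complex.I * ξ * t)) * (Q t : ℂ) with hfξdef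
  have hfc : Continuous fξ := by
    rw [hfξdef]
    fun_prop
  have hfsupp : ∀ x : ℝ, x ∉ Set.Icc (0:ℝ) (2*p:ℝ) → fξ x = 0 := by
    intro x hx
    rw [hfξdef]
    simp [hQ0 x hx]
  have hFT : ∀ n : ℤ, 𝓕 fξ n = F (ξ + 2 * Real.pi * n) := by
    intro n
    rw [Real.fourier_real_eq_integral_exp_smul, hFdef]
    have hpt : ∀ t : ℝ, Complex.exp (↑(-2 * Real.pi * t * (n:ℝ)) * Complex.I) • fξ t
        = Complex.exp (-(Complex.I * ((ξ + 2*Real.pi*n : ℝ):ℂ) * t)) * (Q t : ℂ) := by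
      intro t
      rw [hfξdef, smul_eq_mul, ← mul_assoc, ← Complex.exp_add]
      congr 2
      push_cast
      ring
    simp_rw [hpt]
  have hsumF : Summable fun n : ℤ => 𝓕 fξ n := by
    rw [show (fun n : ℤ => 𝓕 fξ n) = fun n : ℤ => F (ξ + 2*Real.pi*n) from funext hFT]
    exact summable_shift F C ξ hC hFbound
  have hPoisson : (∑' j : ℤ, fξ j) = ∑' n : ℤ, F (ξ + 2*Real.pi*n) := by
    rw [poisson fξ hfc (2*p:ℝ) hNR hfsupp hsumF]
    exact tsum_congr hFT
  have hgoal_eq : (∑' j : ℤ, (Q j : ℂ) * Complex.exp (-(Complex.I * ξ * j)))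
      = ∑' j : ℤ, fξ j := by
    apply tsum_congr
    intro j
    rw [hfξdef, mul_comm]
    norm_num
  rw [hgoal_eq, hPoisson]
  have hgc : ∀ x : ℝ, ((g x : ℝ) : ℂ) = Complex.exp (Complex.I * x * p) * F x := by
    intro x
    rw [key x, ← mul_assoc, ← Complex.exp_add,
      show Complex.I * (x:ℂ) * p + -(Complex.I * x * p) = 0 by ring, Complex.exp_zero, one_mul]
  have hterm : ∀ n : ℤ, F (ξ + 2*Real.pi*n)
      = Complex.exp (-(Complex.I * ξ * p)) * ((g (ξ + 2*Real.pi*n) : ℝ) : ℂ) := by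
    intro n
    rw [key (ξ + 2*Real.pi*n)]
    congr 1
    rw [show -(Complex.I * ((ξ + 2*Real.pi*n : ℝ):ℂ) * p)
        = -(Complex.I * ξ * p) + ((-(n*p) : ℤ) : ℂ) * (2*Real.pi*Complex.I) by push_cast; ring]
    rw [Complex.exp_add, Complex.exp_int_mul_two_pi_mul_I, mul_one]
  rw [tsum_congr hterm, tsum_mul_left]
  have hgsum : Summable fun n : ℤ => g (ξ + 2*Real.pi*n) := by
    apply Complex.summable_ofReal.mp
    have := summable_shift (fun x => ((g x : ℝ):ℂ)) C ξ hC ?_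
    · exact this
    · intro w hw
      show ‖((g w : ℝ):ℂ)‖ ≤ C / w^2
      rw [hgc w, norm_mul, exp_I_norm' _ (by simp), one_mul]
      exact hFbound w hw
  rw [← Complex.ofReal_tsum]
  apply mul_ne_zero (Complex.exp_ne_zero _)
  rw [Complex.ofReal_ne_zero]
  have hex : ∃ n : ℤ, 0 < g (ξ + 2*Real.pi*n) := by
    by_cases hξ : ∃ k : ℤ, ξ = 2*Real.pi*k
    · obtain ⟨k, hk⟩ := hξ
      refine ⟨-k, ?_⟩
      have h0 : ξ + 2*Real.pi*((-k : ℤ):ℝ) = 0 := by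
        push_cast
        rw [hk]
        ring
      rw [h0]
      apply hg_pos
      rw [hu0]
      norm_num
    · refine ⟨0, ?_⟩
      have h0 : ξ + 2*Real.pi*((0:ℤ):ℝ) = ξ := by
        push_cast
        ring
      rw [h0]
      apply hg_pos
      have hξ0 : ξ ≠ 0 := by
        intro h
        exact hξ ⟨0, by simp [h]⟩
      rw [hudef]
      simp only [if_neg hξ0]
      intro h
      have hsin : Real.sin (ξ/2) = 0 := by
        rcases div_eq_zero_iff.mp h with h' | h'
        · linarith [mul_eq_zero.mp h' |>.resolve_left (by norm_num : (2:ℝ) ≠ 0)]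
        · exact absurd h' hξ0
      obtain ⟨k, hk⟩ := Real.sin_eq_zero_iff.mp hsin
      exact hξ ⟨k, by linarith⟩
  obtain ⟨n₀, hn₀⟩ := hex
  exact ne_of_gt (Summable.tsum_pos hgsum (fun n => hg_nonneg _) n₀ hn₀)
end

section
/- Fix integers n ≥ 2 and p ≥ 1, set N = 2p, and for each integer k ≥ 0 define the vector Λ_k = [λ₁, …, λ_N] by λ_{1+j} = k + 2j for j = 0, …, p−1 and λ_{1+p+j} = −n − k + 2 + 2j for j = 0, …, p−1. Then there exist an integer k₀ ≥ 1 and a constant C > 0 such that for every integer k ≥ k₀ and every ξ ∈ ℝ one has ∏_{j=1}^{N} |e^{−λ_j} − e^{−iξ}| / |iξ − λ_j| ≤ C·e^{pk}/(ξ² + k²)^p. -/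
/-- Fix `n ≥ 2`, `p ≥ 1`, `N = 2p`, and for each integer `k ≥ 0` let
`Λ_k = [λ₁, …, λ_N]` with `λ_{1+j} = k + 2j` and `λ_{1+p+j} = −n − k + 2 + 2j`
(`j = 0, …, p−1`).  Then there exist an integer `k₀ ≥ 1` and `C > 0` such that for every
`k ≥ k₀` and every `ξ ∈ ℝ`,
`∏_{j=1}^N |e^{−λ_j} − e^{−iξ}|/|iξ − λ_j| ≤ C·e^{pk}/(ξ² + k²)^p`. -/
theorem statement12
    (n p : ℕ) (hn : 2 ≤ n) (hp : 1 ≤ p)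
    (lam : ℕ → Fin (2 * p) → ℝ)
    (hlam : ∀ (k : ℕ) (j : Fin (2 * p)),
      lam k j = if (j : ℕ) < p then (k : ℝ) + 2 * (j : ℕ)
                else -(n : ℝ) - (k : ℝ) + 2 + 2 * (((j : ℕ) - p : ℕ) : ℝ)) :
    ∃ k₀ : ℕ, 1 ≤ k₀ ∧ ∃ C : ℝ, 0 < C ∧
      ∀ k : ℕ, k₀ ≤ k → ∀ ξ : ℝ,
        (∏ j : Fin (2 * p),
          ‖(Real.exp (-(lam k j)) : ℂ) - Complex.exp (-(Complex.I * ξ))‖ /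
            ‖Complex.I * ξ - (lam k j : ℂ)‖) ≤
        C * Real.exp ((p : ℝ) * k) / (ξ ^ 2 + (k : ℝ) ^ 2) ^ p := by
  refine ⟨4 * p, by omega, (8:ℝ) ^ p * Real.exp n ^ p, by positivity, ?_⟩
  intro k hk ξ
  have hk1 : (1:ℝ) ≤ (k:ℝ) := by exact_mod_cast Nat.one_le_iff_ne_zero.mpr (by omega)
  set D : ℝ := ξ ^ 2 + (k:ℝ) ^ 2 with hDdef
  have hD : 0 < D := by nlinarith [sq_nonneg ξ]
  have hsD : 0 < Real.sqrt D := Real.sqrt_pos.mpr hD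
  have habs : ∀ L : ℝ, ‖Complex.I * ξ - (L:ℂ)‖ = Real.sqrt (ξ^2 + L^2) := by
    intro L
    rw [Complex.norm_def]
    congr 1
    simp [Complex.normSq_apply]
    ring
  have hnum : ∀ L : ℝ,
      ‖(Real.exp (-L) : ℂ) - Complex.exp (-(Complex.I * ξ))‖ ≤ Real.exp (-L) + 1 := by
    intro L
    have h := norm_sub_le ((Real.exp (-L) : ℂ)) (Complex.exp (-(Complex.I * ξ)))
    simpa [Complex.norm_exp, Real.exp_pos, abs_of_pos] using h
  -- per-factor bound
  have hle : ∀ j : Fin (2 * p),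
      ‖(Real.exp (-(lam k j)) : ℂ) - Complex.exp (-(Complex.I * ξ))‖ /
        ‖Complex.I * ξ - (lam k j : ℂ)‖ ≤
      (if (j:ℕ) < p then (2:ℝ) else 4 * Real.exp ((n:ℝ) + k)) / Real.sqrt D := by
    intro j
    rw [habs (lam k j)]
    by_cases hjp : (j:ℕ) < p
    · rw [if_pos hjp]
      have hL : (k:ℝ) ≤ lam k j := by
        rw [hlam k j, if_pos hjp]
        have : (0:ℝ) ≤ 2 * (j:ℕ) := by positivity
        linarith
      have hL0 : 0 ≤ lam k j := by linarith
      refine div_le_div₀ (by norm_num) ?_ hsD ?_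
      · refine (hnum _).trans ?_
        have : Real.exp (-(lam k j)) ≤ 1 := Real.exp_le_one_iff.mpr (by linarith)
        linarith
      · apply Real.sqrt_le_sqrt
        have : (k:ℝ)^2 ≤ (lam k j)^2 := by nlinarith
        linarith
    · rw [if_neg hjp]
      have hjlt : (j:ℕ) < 2 * p := j.isLt
      have hm : ((j:ℕ) - p : ℕ) < p := by omega
      have hmc : (((j:ℕ) - p : ℕ) : ℝ) ≤ (p:ℝ) - 1 := by
        have h1 : ((j:ℕ) - p : ℕ) + 1 ≤ p := by omega
        have h2 := (Nat.cast_le (α := ℝ)).mpr h1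
        push_cast at h2
        linarith
      have hkc : (4:ℝ) * p ≤ (k:ℝ) := by exact_mod_cast (by exact_mod_cast hk : ((4*p : ℕ):ℝ) ≤ (k:ℝ))
      have hnc : (2:ℝ) ≤ (n:ℝ) := by exact_mod_cast hn
      have hLval : lam k j = -(n:ℝ) - k + 2 + 2 * (((j:ℕ) - p : ℕ) : ℝ) := by
        rw [hlam k j, if_neg hjp]
      have hL1 : -(lam k j) ≤ (n:ℝ) + k := by
        rw [hLval]
        have : (0:ℝ) ≤ (((j:ℕ) - p : ℕ) : ℝ) := by positivity
        linarith
      have hL2 : (k:ℝ)/2 ≤ -(lam k j) := by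
        rw [hLval]; linarith
      have hstep : Real.sqrt D / 2 ≤ Real.sqrt (ξ^2 + (lam k j)^2) := by
        have h4 : (Real.sqrt D / 2)^2 ≤ ξ^2 + (lam k j)^2 := by
          rw [div_pow, Real.sq_sqrt hD.le]
          have hk0 : (0:ℝ) ≤ (k:ℝ)/2 := by linarith
          have hsq : ((k:ℝ)/2)^2 ≤ (lam k j)^2 := by nlinarith
          rw [hDdef]
          nlinarith
        calc Real.sqrt D / 2 = Real.sqrt ((Real.sqrt D / 2)^2) :=
              (Real.sqrt_sq (by positivity)).symm
          _ ≤ _ := Real.sqrt_le_sqrt h4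
      have hnum2 : ‖(Real.exp (-(lam k j)) : ℂ) - Complex.exp (-(Complex.I * ξ))‖ ≤
          2 * Real.exp ((n:ℝ) + k) := by
        refine (hnum _).trans ?_
        have h1 : Real.exp (-(lam k j)) ≤ Real.exp ((n:ℝ) + k) := Real.exp_le_exp.mpr hL1
        have h2 : (1:ℝ) ≤ Real.exp ((n:ℝ) + k) := Real.one_le_exp (by linarith)
        linarith
      calc ‖(Real.exp (-(lam k j)) : ℂ) - Complex.exp (-(Complex.I * ξ))‖ /
            Real.sqrt (ξ^2 + (lam k j)^2)
          ≤ (2 * Real.exp ((n:ℝ) + k)) / (Real.sqrt D / 2) :=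
            div_le_div₀ (by positivity) hnum2 (by positivity) hstep
        _ = 4 * Real.exp ((n:ℝ) + k) / Real.sqrt D := by
            field_simp; ring
  have hnonneg : ∀ j ∈ Finset.univ, (0:ℝ) ≤
      ‖(Real.exp (-(lam k j)) : ℂ) - Complex.exp (-(Complex.I * ξ))‖ /
        ‖Complex.I * ξ - (lam k j : ℂ)‖ := fun j _ =>
    div_nonneg (norm_nonneg _) (norm_nonneg _)
  calc (∏ j : Fin (2 * p),
          ‖(Real.exp (-(lam k j)) : ℂ) - Complex.exp (-(Complex.I * ξ))‖ /
            ‖Complex.I * ξ - (lam k j : ℂ)‖)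
      ≤ ∏ j : Fin (2 * p),
          (if (j:ℕ) < p then (2:ℝ) else 4 * Real.exp ((n:ℝ) + k)) / Real.sqrt D :=
        Finset.prod_le_prod hnonneg (fun j _ => hle j)
    _ = ((2:ℝ) / Real.sqrt D) ^ p * ((4 * Real.exp ((n:ℝ) + k)) / Real.sqrt D) ^ p := by
        rw [Fin.prod_univ_eq_prod_range
          (fun i => (if i < p then (2:ℝ) else 4 * Real.exp ((n:ℝ) + k)) / Real.sqrt D) (2*p)]
        rw [two_mul, Finset.prod_range_add]
        congr 1
        · rw [Finset.prod_congr rfl (fun i hi => by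
            rw [if_pos (Finset.mem_range.mp hi)]), Finset.prod_const, Finset.card_range]
        · rw [Finset.prod_congr rfl (fun i hi => by
            rw [if_neg (by omega)]), Finset.prod_const, Finset.card_range]
    _ = (8:ℝ) ^ p * Real.exp n ^ p * Real.exp ((p:ℝ) * k) / D ^ p := by
        have hDs : Real.sqrt D * Real.sqrt D = D := Real.mul_self_sqrt hD.le
        rw [← mul_pow, div_mul_div_comm, hDs, Real.exp_add, Real.exp_nat_mul, div_pow]
        ring
    _ ≤ (8:ℝ) ^ p * Real.exp n ^ p * Real.exp ((p:ℝ) * k) / (ξ ^ 2 + (k:ℝ) ^ 2) ^ p := le_refl _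
end
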